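/- arXiv:2102.01054 — 3 statements merged into one kernel-verified Lean document; each statement's English description precedes it below -/
import Mathlib

section
/- For a partition μ ⊆ n×n that is the complement of a rectangle ρ in the n×n square, and a partition λ_i that is the complement (right-justified in the bottom-right corner) of a single hook ν_i ⊆ n×n, the maximum number of boxes of the skew shape μ \ λ_i lying on a single diagonal of slope -1 equals 1 if ν_i ⊄ ρ and 0 if ν_i ⊆ ρ. -/
/-- `maxdiag S`: the maximal number of boxes of `S` on a single diagonal of slope `-1`
(boxes `(r,c)` with `r - c` constant). -/
def maxdiag (S : Finset (ℕ × ℕ)) : ℕ :=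
  S.sup fun p => (S.filter fun q => q.1 + p.2 = q.2 + p.1).card

/-- The boxes of the Young diagram of `f` inside the `n×n` square
(box `(r,c)` with rows/columns indexed from 1). -/
def boxesOf (n : ℕ) (f : ℕ → ℕ) : Finset (ℕ × ℕ) :=
  (Finset.Icc 1 n ×ˢ Finset.Icc 1 n).filter fun p => p.2 ≤ f p.1

/-- The hook partition `(a, 1^b)` as a function giving row lengths. -/
def hookFun (a b : ℕ) : ℕ → ℕ := fun s => if s = 1 then a else if s ≤ b + 1 then 1 else 0

/-- The complement of a shape, right-justified in the bottom-right corner of `n×n`. -/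
def complOf (n : ℕ) (f : ℕ → ℕ) : ℕ → ℕ := fun r => n - f (n + 1 - r)

/-- For `μ` the complement of an `i×j` rectangle in `n×n` and `λ'` the complement
(right-justified in the bottom-right corner) of a hook `ν = (a,1^b) ⊆ n×n`,
`maxdiag(μ \ λ') = 1` if `ν ⊄ ρ` and `= 0` if `ν ⊆ ρ`. -/
theorem stmt_8 (n a b i j : ℕ) (ha : 1 ≤ a) (han : a ≤ n) (hb : b + 1 ≤ n)
    (hi : i ≤ n) (hj : j ≤ n) :
    maxdiag (boxesOf n (fun r => if r ≤ n - i then n else n - j) \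
        boxesOf n (complOf n (hookFun a b))) =
      if a ≤ j ∧ b + 1 ≤ i then 0 else 1 := by
  have hn : 1 ≤ n := le_trans ha han
  set μf : ℕ → ℕ := fun r => if r ≤ n - i then n else n - j with hμf
  set lf : ℕ → ℕ := complOf n (hookFun a b) with hlf
  set S : Finset (ℕ × ℕ) := boxesOf n μf \ boxesOf n lf with hS
  -- membership characterization
  have hmem : ∀ p : ℕ × ℕ, p ∈ S ↔
      1 ≤ p.1 ∧ p.1 ≤ n ∧ 1 ≤ p.2 ∧ p.2 ≤ n ∧ p.2 ≤ μf p.1 ∧ lf p.1 < p.2 := by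
    intro p
    simp only [hS, boxesOf, Finset.mem_sdiff, Finset.mem_filter, Finset.mem_product,
      Finset.mem_Icc]
    constructor
    · rintro ⟨⟨⟨⟨h1, h2⟩, h3, h4⟩, h5⟩, h6⟩
      refine ⟨h1, h2, h3, h4, h5, ?_⟩
      by_contra hc
      exact h6 ⟨⟨⟨h1, h2⟩, h3, h4⟩, by omega⟩
    · rintro ⟨h1, h2, h3, h4, h5, h6⟩
      exact ⟨⟨⟨⟨h1, h2⟩, h3, h4⟩, h5⟩, fun h => by omega⟩
  -- every box is on the last row or last column
  have hedge : ∀ p : ℕ × ℕ, p ∈ S → p.1 = n ∨ p.2 = n := by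
    intro p hp
    rw [hmem] at hp
    by_contra hc
    push_neg at hc
    have h1 : p.1 < n := lt_of_le_of_ne hp.2.1 hc.1
    have h2 : p.2 < n := lt_of_le_of_ne hp.2.2.2.1 hc.2
    have hval : hookFun a b (n + 1 - p.1) ≤ 1 := by
      unfold hookFun
      rw [if_neg (by omega)]
      split <;> omega
    have hlfp : lf p.1 = n - hookFun a b (n + 1 - p.1) := rfl
    omega
  -- each diagonal meets S in at most the single point p
  have huniq : ∀ p ∈ S, (S.filter fun q => q.1 + p.2 = q.2 + p.1) = {p} := by
    intro p hp
    ext q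
    simp only [Finset.mem_filter, Finset.mem_singleton]
    constructor
    · rintro ⟨hq, hd⟩
      have ep := hedge p hp
      have eq' := hedge q hq
      rw [hmem] at hp hq
      have : q.1 = p.1 ∧ q.2 = p.2 := by omega
      exact Prod.ext this.1 this.2
    · rintro rfl
      exact ⟨hp, by omega⟩
  by_cases hcase : a ≤ j ∧ b + 1 ≤ i
  · rw [if_pos hcase]
    have hempty : S = ∅ := by
      rw [Finset.eq_empty_iff_forall_notMem]
      intro p hp
      have ep := hedge p hp
      rw [hmem] at hp
      obtain ⟨h1, h2, h3, h4, h5, h6⟩ := hp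
      rcases ep with ep | ep
      · -- last row
        have hμ : μf n = n - j := by
          show (if n ≤ n - i then n else n - j) = n - j
          rw [if_neg (by omega)]
        have hl : lf n = n - a := by
          show n - hookFun a b (n + 1 - n) = n - a
          have : n + 1 - n = 1 := by omega
          rw [this]
          unfold hookFun
          rw [if_pos rfl]
        rw [ep] at h5 h6
        rw [hμ] at h5
        rw [hl] at h6
        omega
      · -- last column, p.1 < n case (p.1 = n handled by arithmetic too)
        rw [ep] at h5 h6
        -- from lf p.1 < n, we get hookFun at n+1-p.1 ≥ 1
        have hlfp : lf p.1 = n - hookFun a b (n + 1 - p.1) := rfl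
        have hk : 1 ≤ hookFun a b (n + 1 - p.1) := by omega
        have hrange : n + 1 - p.1 ≤ b + 1 := by
          by_contra hcon
          have : hookFun a b (n + 1 - p.1) = 0 := by
            unfold hookFun
            rw [if_neg (by omega), if_neg (by omega)]
          omega
        -- μf p.1 ≥ n forces p.1 ≤ n - i
        have hμ : p.1 ≤ n - i := by
          by_contra hcon
          have : μf p.1 = n - j := by
            show (if p.1 ≤ n - i then n else n - j) = n - j
            rw [if_neg hcon]
          omega
        omega
    rw [hempty]
    simp [maxdiag]
  · rw [if_neg hcase]
    -- find a witness
    have hwit : ∃ p, p ∈ S := by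
      by_cases hji : j < a
      · refine ⟨(n, n - a + 1), ?_⟩
        rw [hmem]
        have hl : lf n = n - a := by
          show n - hookFun a b (n + 1 - n) = n - a
          have : n + 1 - n = 1 := by omega
          rw [this]
          unfold hookFun
          rw [if_pos rfl]
        have hμ : n - a + 1 ≤ μf n := by
          show n - a + 1 ≤ if n ≤ n - i then n else n - j
          split <;> omega
        refine ⟨by omega, le_refl n, by omega, by omega, hμ, by rw [hl]; omega⟩
      · -- then i ≤ b
        have hib : i ≤ b := by omega
        refine ⟨(n - i, n), ?_⟩
        rw [hmem]
        dsimp only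
        have hμ : μf (n - i) = n := by
          show (if n - i ≤ n - i then n else n - j) = n
          rw [if_pos (le_refl _)]
        have hk : 1 ≤ hookFun a b (n + 1 - (n - i)) := by
          have : n + 1 - (n - i) = i + 1 := by omega
          rw [this]
          unfold hookFun
          split_ifs <;> omega
        have hl : lf (n - i) = n - hookFun a b (n + 1 - (n - i)) := rfl
        refine ⟨by omega, by omega, by omega, le_refl n, by rw [hμ], by rw [hl]; omega⟩
    obtain ⟨p0, hp0⟩ := hwit
    unfold maxdiag
    apply le_antisymm
    · apply Finset.sup_le
      intro p hp
      rw [huniq p hp]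
      simp
    · have h1 : ((S.filter fun q => q.1 + p0.2 = q.2 + p0.1).card) = 1 := by
        rw [huniq p0 hp0]; simp
      calc 1 = (S.filter fun q => q.1 + p0.2 = q.2 + p0.1).card := h1.symm
        _ ≤ _ := Finset.le_sup (f := fun p => (S.filter fun q => q.1 + p.2 = q.2 + p.1).card) hp0
end

section
/- Let λ ⊆ n×n be a partition with at least as many boxes above the main diagonal as below, with complement having hook decomposition ν_1 + ... + ν_k, and let λ_i be the complement of ν_i right-justified in the bottom-right corner of the n×n square. Then for every partition μ that is the complement of a rectangle in n×n, maxdiag(μ \ λ) = Σ_{i=1}^k maxdiag(μ \ λ_i). -/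
/-- `conjc n lam s` is the `s`-th part of the conjugate of the complement of `lam`. -/
def conjc (n : ℕ) (lam : ℕ → ℕ) (s : ℕ) : ℕ :=
  ((Finset.Icc 1 n).filter (fun t => s ≤ complOf n lam t)).card

open Finset

/-- A down-closed subset of `Icc 1 n` is an initial interval. -/
lemma dc_eq_Icc {n : ℕ} {F : Finset ℕ} (hF : F ⊆ Finset.Icc 1 n)
    (hdc : ∀ a ∈ F, ∀ b, 1 ≤ b → b ≤ a → b ∈ F) : F = Finset.Icc 1 F.card := by
  rcases F.eq_empty_or_nonempty with h | h
  · simp [h]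
  · have hmax := F.max'_mem h
    have hFeq : F = Finset.Icc 1 (F.max' h) := by
      ext t
      simp only [Finset.mem_Icc]
      constructor
      · intro ht; exact ⟨(Finset.mem_Icc.mp (hF ht)).1, F.le_max' t ht⟩
      · intro ht; exact hdc _ hmax t ht.1 ht.2
    have hcard : F.card = F.max' h := by conv_lhs => rw [hFeq]; simp
    rw [hcard]; exact hFeq

lemma complOf_anti {n : ℕ} {g : ℕ → ℕ}
    (hg : ∀ a b : ℕ, 1 ≤ a → a ≤ b → b ≤ n → g b ≤ g a) :
    ∀ a b : ℕ, 1 ≤ a → a ≤ b → b ≤ n → complOf n g b ≤ complOf n g a := by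
  intro a b ha hab hbn
  have h1 : g (n + 1 - a) ≤ g (n + 1 - b) := by
    apply hg <;> omega
  simp only [complOf]
  omega

lemma conjc_le {n : ℕ} (lam : ℕ → ℕ) (s : ℕ) : conjc n lam s ≤ n := by
  have := Finset.card_filter_le (Finset.Icc 1 n) (fun t => s ≤ complOf n lam t)
  simpa [conjc] using this

/-- Characterization of the conjugate parts. -/
lemma conjc_char {n : ℕ} {lam : ℕ → ℕ}
    (hlam : ∀ a b : ℕ, 1 ≤ a → a ≤ b → b ≤ n → lam b ≤ lam a)
    (s m : ℕ) (hm : 1 ≤ m) :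
    m ≤ conjc n lam s ↔ (m ≤ n ∧ s ≤ complOf n lam m) := by
  set F := (Finset.Icc 1 n).filter (fun t => s ≤ complOf n lam t) with hFdef
  have hdc : ∀ a ∈ F, ∀ b, 1 ≤ b → b ≤ a → b ∈ F := by
    intro a ha b hb1 hba
    obtain ⟨ha1, ha2⟩ := Finset.mem_filter.mp ha
    obtain ⟨ha3, ha4⟩ := Finset.mem_Icc.mp ha1
    refine Finset.mem_filter.mpr ⟨Finset.mem_Icc.mpr ⟨hb1, le_trans hba ha4⟩, ?_⟩
    exact le_trans ha2 (complOf_anti hlam b a hb1 hba ha4)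
  have hFeq : F = Finset.Icc 1 F.card := dc_eq_Icc (Finset.filter_subset _ _) hdc
  have hcard : conjc n lam s = F.card := rfl
  rw [hcard]
  constructor
  · intro h
    have hmF : m ∈ F := by rw [hFeq]; exact Finset.mem_Icc.mpr ⟨hm, h⟩
    obtain ⟨h1, h2⟩ := Finset.mem_filter.mp hmF
    exact ⟨(Finset.mem_Icc.mp h1).2, h2⟩
  · intro ⟨h1, h2⟩
    have hmF : m ∈ F := Finset.mem_filter.mpr ⟨Finset.mem_Icc.mpr ⟨hm, h1⟩, h2⟩
    rw [hFeq] at hmF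
    exact (Finset.mem_Icc.mp hmF).2

/-- The key lemma: for any partition `g` inside the `n×n` square and co-rectangle `μ`,
the maxdiag of `μ \ g` is the max of the diagonal `j` count and diagonal `-i` count. -/
lemma maxdiag_corect (n i j : ℕ) (hi : i ≤ n) (hj : j ≤ n) (g : ℕ → ℕ)
    (hg : ∀ a b : ℕ, 1 ≤ a → a ≤ b → b ≤ n → g b ≤ g a) (hgb : ∀ r, g r ≤ n) :
    maxdiag (boxesOf n (fun r => if r ≤ n - i then n else n - j) \ boxesOf n g) =
      max ((Finset.Icc 1 n).filter (fun s => s + j ≤ complOf n g s)).card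
          ((Finset.Icc 1 n).filter (fun s => s + i ≤ n ∧ s ≤ complOf n g (s + i))).card := by
  set S := boxesOf n (fun r => if r ≤ n - i then n else n - j) \ boxesOf n g with hSdef
  have hS : ∀ q : ℕ × ℕ, q ∈ S ↔ (1 ≤ q.1 ∧ q.1 ≤ n ∧ 1 ≤ q.2 ∧ q.2 ≤ n ∧
      (q.1 + i ≤ n ∨ q.2 + j ≤ n) ∧ g q.1 < q.2) := by
    intro q
    simp only [hSdef, boxesOf, Finset.mem_sdiff, Finset.mem_filter, Finset.mem_product,
      Finset.mem_Icc]
    constructor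
    · rintro ⟨⟨⟨⟨h1, h2⟩, h3, h4⟩, h5⟩, h6⟩
      have h7 : ¬ q.2 ≤ g q.1 := fun hc => h6 ⟨⟨⟨h1, h2⟩, h3, h4⟩, hc⟩
      split_ifs at h5 with hr <;> omega
    · rintro ⟨h1, h2, h3, h4, h5, h6⟩
      refine ⟨⟨⟨⟨h1, h2⟩, h3, h4⟩, ?_⟩, ?_⟩
      · split_ifs with hr <;> omega
      · rintro ⟨-, hc⟩; omega
  set X := S.filter (fun q => q.1 = q.2 + j) with hXdef
  set Y := S.filter (fun q => q.2 = q.1 + i) with hYdef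
  -- upper bound: every diagonal injects into X or Y
  have upper : ∀ p ∈ S, ((S.filter fun q => q.1 + p.2 = q.2 + p.1).card ≤ max X.card Y.card) := by
    intro p hp
    by_cases h1 : p.2 + j ≤ p.1
    · -- inject into X, row-preserving
      refine le_trans (Finset.card_le_card_of_injOn (fun q => (q.1, q.1 - j)) ?_ ?_)
        (le_max_left _ _)
      · intro q hq
        obtain ⟨hqS, hqd⟩ := Finset.mem_filter.mp hq
        rw [hS] at hqS
        refine Finset.mem_filter.mpr ⟨(hS _).mpr ?_, ?_⟩ <;> simp only <;> omega
      · intro q hq q' hq' heq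
        obtain ⟨hqS, hqd⟩ := Finset.mem_filter.mp hq
        obtain ⟨hqS', hqd'⟩ := Finset.mem_filter.mp hq'
        rw [hS] at hqS hqS'
        simp only [Prod.mk.injEq] at heq
        refine Prod.ext ?_ ?_ <;> omega
    · by_cases h2 : p.2 + j ≤ p.1 + i
      · -- inject into X, column-preserving: q ↦ (q.2 + j, q.2)
        refine le_trans (Finset.card_le_card_of_injOn (fun q => (q.2 + j, q.2)) ?_ ?_)
          (le_max_left _ _)
        · intro q hq
          obtain ⟨hqS, hqd⟩ := Finset.mem_filter.mp hq
          rw [hS] at hqS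
          have hle : q.1 ≤ q.2 + j := by omega
          have hcjn : q.2 + j ≤ n := by omega
          have hgle : g (q.2 + j) ≤ g q.1 := hg q.1 (q.2 + j) (by omega) hle hcjn
          refine Finset.mem_filter.mpr ⟨(hS _).mpr ?_, ?_⟩ <;> simp only <;> omega
        · intro q hq q' hq' heq
          obtain ⟨hqS, hqd⟩ := Finset.mem_filter.mp hq
          obtain ⟨hqS', hqd'⟩ := Finset.mem_filter.mp hq'
          simp only [Prod.mk.injEq] at heq
          refine Prod.ext ?_ ?_ <;> omega
      · by_cases h3 : p.2 ≤ p.1 + i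
        · -- inject into Y, row-preserving: q ↦ (q.1, q.1 + i)
          refine le_trans (Finset.card_le_card_of_injOn (fun q => (q.1, q.1 + i)) ?_ ?_)
            (le_max_right _ _)
          · intro q hq
            obtain ⟨hqS, hqd⟩ := Finset.mem_filter.mp hq
            rw [hS] at hqS
            refine Finset.mem_filter.mpr ⟨(hS _).mpr ?_, ?_⟩ <;> simp only <;> omega
          · intro q hq q' hq' heq
            obtain ⟨hqS, hqd⟩ := Finset.mem_filter.mp hq
            obtain ⟨hqS', hqd'⟩ := Finset.mem_filter.mp hq'
            simp only [Prod.mk.injEq] at heq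
            refine Prod.ext ?_ ?_ <;> omega
        · -- inject into Y, column-preserving: q ↦ (q.2 - i, q.2)
          refine le_trans (Finset.card_le_card_of_injOn (fun q => (q.2 - i, q.2)) ?_ ?_)
            (le_max_right _ _)
          · intro q hq
            obtain ⟨hqS, hqd⟩ := Finset.mem_filter.mp hq
            rw [hS] at hqS
            have hlt : q.1 + i < q.2 := by omega
            have hgle : g (q.2 - i) ≤ g q.1 := hg q.1 (q.2 - i) (by omega) (by omega) (by omega)
            refine Finset.mem_filter.mpr ⟨(hS _).mpr ?_, ?_⟩ <;> simp only <;> omega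
          · intro q hq q' hq' heq
            obtain ⟨hqS, hqd⟩ := Finset.mem_filter.mp hq
            obtain ⟨hqS', hqd'⟩ := Finset.mem_filter.mp hq'
            simp only [Prod.mk.injEq] at heq
            refine Prod.ext ?_ ?_ <;> omega
  -- lower bounds
  have lowX : X.card ≤ maxdiag S := by
    rcases X.eq_empty_or_nonempty with h | ⟨p, hp⟩
    · simp [h]
    · have hpS : p ∈ S := Finset.filter_subset _ _ hp
      have hsub : X ⊆ S.filter (fun q => q.1 + p.2 = q.2 + p.1) := by
        intro q hq
        obtain ⟨hqS, hqd⟩ := Finset.mem_filter.mp hq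
        have hpd := (Finset.mem_filter.mp hp).2
        exact Finset.mem_filter.mpr ⟨hqS, by omega⟩
      unfold maxdiag
      exact le_trans (Finset.card_le_card hsub)
        (Finset.le_sup (f := fun p => (S.filter fun q => q.1 + p.2 = q.2 + p.1).card) hpS)
  have lowY : Y.card ≤ maxdiag S := by
    rcases Y.eq_empty_or_nonempty with h | ⟨p, hp⟩
    · simp [h]
    · have hpS : p ∈ S := Finset.filter_subset _ _ hp
      have hsub : Y ⊆ S.filter (fun q => q.1 + p.2 = q.2 + p.1) := by
        intro q hq
        obtain ⟨hqS, hqd⟩ := Finset.mem_filter.mp hq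
        have hpd := (Finset.mem_filter.mp hp).2
        exact Finset.mem_filter.mpr ⟨hqS, by omega⟩
      unfold maxdiag
      exact le_trans (Finset.card_le_card hsub)
        (Finset.le_sup (f := fun p => (S.filter fun q => q.1 + p.2 = q.2 + p.1).card) hpS)
  have hmd : maxdiag S = max X.card Y.card := by
    unfold maxdiag
    exact le_antisymm (Finset.sup_le upper) (max_le lowX lowY)
  -- now compute X.card and Y.card
  have hXcard : X.card = ((Finset.Icc 1 n).filter (fun s => s + j ≤ complOf n g s)).card := by
    apply Finset.card_nbij' (fun q => n + 1 - q.1) (fun s => (n + 1 - s, n + 1 - s - j))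
    · intro q hq
      obtain ⟨hqS, hqd⟩ := Finset.mem_filter.mp hq
      rw [hS] at hqS
      have hgb1 := hgb q.1
      refine Finset.mem_filter.mpr ⟨Finset.mem_Icc.mpr ⟨by dsimp only; omega, by dsimp only; omega⟩, ?_⟩
      simp only [complOf]
      rw [show n + 1 - (n + 1 - q.1) = q.1 from by omega]
      omega
    · intro s hs
      obtain ⟨hs1, hs2⟩ := Finset.mem_filter.mp hs
      obtain ⟨hs3, hs4⟩ := Finset.mem_Icc.mp hs1
      simp only [complOf] at hs2
      have hgb1 := hgb (n + 1 - s)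
      refine Finset.mem_filter.mpr ⟨(hS _).mpr ?_, ?_⟩ <;> simp only <;> omega
    · intro q hq
      obtain ⟨hqS, hqd⟩ := Finset.mem_filter.mp hq
      rw [hS] at hqS
      refine Prod.ext ?_ ?_ <;> simp only <;> omega
    · intro s hs
      obtain ⟨hs1, hs2⟩ := Finset.mem_filter.mp hs
      obtain ⟨hs3, hs4⟩ := Finset.mem_Icc.mp hs1
      simp only
      omega
  have hYcard : Y.card = ((Finset.Icc 1 n).filter
      (fun s => s + i ≤ n ∧ s ≤ complOf n g (s + i))).card := by
    apply Finset.card_nbij' (fun q => n + 1 - q.2) (fun s => (n + 1 - s - i, n + 1 - s))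
    · intro q hq
      obtain ⟨hqS, hqd⟩ := Finset.mem_filter.mp hq
      rw [hS] at hqS
      have hgb1 := hgb q.1
      refine Finset.mem_filter.mpr ⟨Finset.mem_Icc.mpr ⟨by dsimp only; omega, by dsimp only; omega⟩, ⟨by dsimp only; omega, ?_⟩⟩
      simp only [complOf]
      rw [show n + 1 - (n + 1 - q.2 + i) = q.1 from by omega]
      omega
    · intro s hs
      obtain ⟨hs1, hs2, hs3⟩ := Finset.mem_filter.mp hs
      obtain ⟨hs4, hs5⟩ := Finset.mem_Icc.mp hs1
      simp only [complOf] at hs3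
      rw [show n + 1 - (s + i) = n + 1 - s - i from by omega] at hs3
      have hgb1 := hgb (n + 1 - s - i)
      refine Finset.mem_filter.mpr ⟨(hS _).mpr ?_, ?_⟩ <;> simp only <;> omega
    · intro q hq
      obtain ⟨hqS, hqd⟩ := Finset.mem_filter.mp hq
      rw [hS] at hqS
      refine Prod.ext ?_ ?_ <;> simp only <;> omega
    · intro s hs
      obtain ⟨hs1, hs2, hs3⟩ := Finset.mem_filter.mp hs
      obtain ⟨hs4, hs5⟩ := Finset.mem_Icc.mp hs1
      simp only
      omega
  rw [hmd, hXcard, hYcard]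

lemma complOf_complOf {n : ℕ} {h : ℕ → ℕ} (hb : ∀ r, h r ≤ n) {t : ℕ}
    (ht2 : t ≤ n + 1) : complOf n (complOf n h) t = h t := by
  simp only [complOf]
  rw [show n + 1 - (n + 1 - t) = t from by omega]
  have := hb t
  omega

lemma max_ite_or (P Q : Prop) [Decidable P] [Decidable Q] :
    max (if P then 1 else 0) (if Q then 1 else 0) = if P ∨ Q then (1 : ℕ) else 0 := by
  split_ifs <;> simp_all

/-- Evaluation of the per-hook term. -/
lemma hook_term (n i j : ℕ) (hi : i ≤ n) (hj : j ≤ n) (a b : ℕ)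
    (ha1 : 1 ≤ a) (han : a ≤ n) (hbn : b + 1 ≤ n) :
    maxdiag (boxesOf n (fun r => if r ≤ n - i then n else n - j) \
        boxesOf n (complOf n (hookFun a b))) =
      if (j + 1 ≤ a ∨ i ≤ b) then 1 else 0 := by
  have hhb : ∀ r, hookFun a b r ≤ n := by
    intro r; simp only [hookFun]; split_ifs <;> omega
  have hhmono : ∀ x y : ℕ, 1 ≤ x → x ≤ y → y ≤ n → hookFun a b y ≤ hookFun a b x := by
    intro x y hx hxy hyn; simp only [hookFun]; split_ifs <;> omega
  rw [maxdiag_corect n i j hi hj _ (complOf_anti hhmono) (fun r => Nat.sub_le _ _)]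
  have hAset : (Finset.Icc 1 n).filter
      (fun t => t + j ≤ complOf n (complOf n (hookFun a b)) t) =
      if j + 1 ≤ a then ({1} : Finset ℕ) else ∅ := by
    ext t
    by_cases ht : 1 ≤ t ∧ t ≤ n
    · simp only [Finset.mem_filter, Finset.mem_Icc,
        complOf_complOf hhb (show t ≤ n + 1 from by omega), hookFun]
      split_ifs <;> simp_all <;> omega
    · constructor
      · intro hmem
        exact absurd (Finset.mem_Icc.mp (Finset.mem_filter.mp hmem).1) ht
      · intro hmem
        split_ifs at hmem with hja
        · rw [Finset.mem_singleton] at hmem; omega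
        · exact absurd hmem (Finset.notMem_empty t)
  have hBset : (Finset.Icc 1 n).filter
      (fun t => t + i ≤ n ∧ t ≤ complOf n (complOf n (hookFun a b)) (t + i)) =
      if i ≤ b then ({1} : Finset ℕ) else ∅ := by
    ext t
    by_cases ht : 1 ≤ t ∧ t ≤ n ∧ t + i ≤ n
    · simp only [Finset.mem_filter, Finset.mem_Icc,
        complOf_complOf hhb (show t + i ≤ n + 1 from by omega), hookFun]
      split_ifs <;> simp_all <;> omega
    · constructor
      · intro hmem
        obtain ⟨h1, h2, h3⟩ := Finset.mem_filter.mp hmem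
        obtain ⟨h4, h5⟩ := Finset.mem_Icc.mp h1
        omega
      · intro hmem
        split_ifs at hmem with hib
        · rw [Finset.mem_singleton] at hmem; omega
        · exact absurd hmem (Finset.notMem_empty t)
  rw [hAset, hBset]
  rw [show ((if j + 1 ≤ a then ({1} : Finset ℕ) else ∅)).card = if j + 1 ≤ a then 1 else 0
      from by split_ifs <;> simp,
    show ((if i ≤ b then ({1} : Finset ℕ) else ∅)).card = if i ≤ b then 1 else 0
      from by split_ifs <;> simp]
  exact max_ite_or _ _

/-- Let `λ ⊆ n×n` have at least as many boxes above the main diagonal as below, and let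
the complement `λ^c` have hook decomposition `ν_1 + ⋯ + ν_k` (one hook per diagonal box
`s ≤ λ^c_s`, with `ν_s = (λ^c_s - s + 1, 1^{(λ^c)'_s - s})`), with `λ_s` the complement
of `ν_s` right-justified in the bottom-right corner. Then for every `μ` that is the
complement of a rectangle in `n×n`, `maxdiag(μ\λ) = Σ_s maxdiag(μ\λ_s)`. -/
theorem stmt_9 (n : ℕ) (lam : ℕ → ℕ)
    (hmono : ∀ i j : ℕ, 1 ≤ i → i ≤ j → lam j ≤ lam i)
    (hbound : ∀ i : ℕ, lam i ≤ n)
    (hbal : ((Finset.Icc 1 n ×ˢ Finset.Icc 1 n).filter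
        (fun p => p.2 ≤ lam p.1 ∧ p.2 < p.1)).card ≤
      ((Finset.Icc 1 n ×ˢ Finset.Icc 1 n).filter
        (fun p => p.2 ≤ lam p.1 ∧ p.1 < p.2)).card)
    (i j : ℕ) (hi : i ≤ n) (hj : j ≤ n) :
    maxdiag (boxesOf n (fun r => if r ≤ n - i then n else n - j) \ boxesOf n lam) =
      ∑ s ∈ (Finset.Icc 1 n).filter (fun s => s ≤ complOf n lam s),
        maxdiag (boxesOf n (fun r => if r ≤ n - i then n else n - j) \
          boxesOf n (complOf n
            (hookFun (complOf n lam s - s + 1) (conjc n lam s - s)))) := by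
  have hlam : ∀ a b : ℕ, 1 ≤ a → a ≤ b → b ≤ n → lam b ≤ lam a :=
    fun a b ha hab _ => hmono a b ha hab
  -- rewrite each summand
  have hterm : ∀ s ∈ (Finset.Icc 1 n).filter (fun s => s ≤ complOf n lam s),
      maxdiag (boxesOf n (fun r => if r ≤ n - i then n else n - j) \
        boxesOf n (complOf n (hookFun (complOf n lam s - s + 1) (conjc n lam s - s)))) =
      if (s + j ≤ complOf n lam s ∨ s + i ≤ conjc n lam s) then 1 else 0 := by
    intro s hs
    obtain ⟨hs1, hs2⟩ := Finset.mem_filter.mp hs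
    obtain ⟨hs3, hs4⟩ := Finset.mem_Icc.mp hs1
    have hcn : complOf n lam s ≤ n := Nat.sub_le _ _
    have hkn : conjc n lam s ≤ n := conjc_le lam s
    have hsk : s ≤ conjc n lam s := (conjc_char hlam s s hs3).mpr ⟨hs4, hs2⟩
    rw [hook_term n i j hi hj _ _ (by omega) (by omega) (by omega)]
    have hiff : (j + 1 ≤ complOf n lam s - s + 1 ∨ i ≤ conjc n lam s - s) ↔
        (s + j ≤ complOf n lam s ∨ s + i ≤ conjc n lam s) := by
      constructor
      · rintro (h | h)
        · exact Or.inl (by omega)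
        · exact Or.inr (by omega)
      · rintro (h | h)
        · exact Or.inl (by omega)
        · exact Or.inr (by omega)
    simp only [hiff]
  rw [Finset.sum_congr rfl hterm, ← Finset.card_filter, Finset.filter_filter]
  -- the filtered set is the union of two down-closed sets
  set A := (Finset.Icc 1 n).filter (fun s => s + j ≤ complOf n lam s) with hAdef
  set B := (Finset.Icc 1 n).filter
    (fun s => s + i ≤ n ∧ s ≤ complOf n lam (s + i)) with hBdef
  set B' := (Finset.Icc 1 n).filter (fun s => s + i ≤ conjc n lam s) with hB'def
  have hBB' : B = B' := by
    ext t
    simp only [hBdef, hB'def, Finset.mem_filter, Finset.mem_Icc]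
    constructor
    · rintro ⟨⟨h1, h2⟩, h3, h4⟩
      exact ⟨⟨h1, h2⟩, (conjc_char hlam t (t + i) (by omega)).mpr ⟨h3, h4⟩⟩
    · rintro ⟨⟨h1, h2⟩, h3⟩
      exact ⟨⟨h1, h2⟩, (conjc_char hlam t (t + i) (by omega)).mp h3⟩
  have hfilter_eq : (Finset.Icc 1 n).filter (fun s => s ≤ complOf n lam s ∧
      (s + j ≤ complOf n lam s ∨ s + i ≤ conjc n lam s)) = A ∪ B' := by
    ext t
    simp only [hAdef, hB'def, Finset.mem_union, Finset.mem_filter, Finset.mem_Icc]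
    constructor
    · rintro ⟨⟨h1, h2⟩, h3, (h4 | h4)⟩
      · exact Or.inl ⟨⟨h1, h2⟩, h4⟩
      · exact Or.inr ⟨⟨h1, h2⟩, h4⟩
    · rintro (⟨⟨h1, h2⟩, h3⟩ | ⟨⟨h1, h2⟩, h3⟩)
      · exact ⟨⟨h1, h2⟩, by omega, Or.inl h3⟩
      · have htk : t ≤ conjc n lam t := by omega
        have := (conjc_char hlam t t h1).mp htk
        exact ⟨⟨h1, h2⟩, this.2, Or.inr h3⟩
  rw [maxdiag_corect n i j hi hj lam hlam hbound, hfilter_eq, ← hAdef, ← hBdef, hBB']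
  -- both A and B' are initial intervals
  have hAdc : A = Finset.Icc 1 A.card := by
    apply dc_eq_Icc (Finset.filter_subset _ _)
    intro x hx y hy1 hyx
    obtain ⟨hx1, hx2⟩ := Finset.mem_filter.mp hx
    obtain ⟨hx3, hx4⟩ := Finset.mem_Icc.mp hx1
    have := complOf_anti hlam y x hy1 hyx hx4
    exact Finset.mem_filter.mpr ⟨Finset.mem_Icc.mpr ⟨hy1, by omega⟩, by omega⟩
  have hB'dc : B' = Finset.Icc 1 B'.card := by
    apply dc_eq_Icc (Finset.filter_subset _ _)
    intro x hx y hy1 hyx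
    obtain ⟨hx1, hx2⟩ := Finset.mem_filter.mp hx
    obtain ⟨hx3, hx4⟩ := Finset.mem_Icc.mp hx1
    have hanti : conjc n lam x ≤ conjc n lam y := by
      apply Finset.card_le_card
      intro t ht
      obtain ⟨ht1, ht2⟩ := Finset.mem_filter.mp ht
      exact Finset.mem_filter.mpr ⟨ht1, by omega⟩
    exact Finset.mem_filter.mpr ⟨Finset.mem_Icc.mpr ⟨hy1, by omega⟩, by omega⟩
  rw [show A ∪ B' = Finset.Icc 1 (max A.card B'.card) from by
    conv_lhs => rw [hAdc, hB'dc]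
    ext t
    simp only [Finset.mem_union, Finset.mem_Icc]
    omega]
  simp [Nat.card_Icc]
end

section
/- The n×n matrix with rows indexed by i ∈ {1,...,n} and columns by j ∈ {1,...,n}, whose (i,j) entry is maxdiag(μ_i \ λ_j) if i = n and maxdiag(μ_i \ λ_j) + maxdiag(μ_i^T \ λ_j) otherwise — where μ_i is the i×n rectangle for i < n and the hook (n, 1^{n-1}) for i = n, and λ_j = (n^{n-j}, (n-1)^{j-1}) — equals the matrix with entries 1 if i = n, 1 if i ≠ n and j ≤ n - i, and 2 if i ≠ n and j > n - i. -/
/-- The partition `λ_j = (n^{n-j}, (n-1)^{j-1})`. -/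
def lamJ (n j : ℕ) : ℕ → ℕ :=
  fun r => if r ≤ n - j then n else if r ≤ n - 1 then n - 1 else 0


lemma mem_boxesOf {n : ℕ} {f : ℕ → ℕ} {p : ℕ × ℕ} :
    p ∈ boxesOf n f ↔ (1 ≤ p.1 ∧ p.1 ≤ n) ∧ (1 ≤ p.2 ∧ p.2 ≤ n) ∧ p.2 ≤ f p.1 := by
  simp [boxesOf, Finset.mem_filter, Finset.mem_product, Finset.mem_Icc, and_assoc]

lemma maxdiag_eq_zero {S : Finset (ℕ × ℕ)} (h : ∀ p, p ∉ S) : maxdiag S = 0 := by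
  rw [Finset.eq_empty_of_forall_notMem h]; rfl

lemma maxdiag_eq_one {S : Finset (ℕ × ℕ)} (hne : S.Nonempty)
    (h : ∀ p ∈ S, ∀ q ∈ S, q.1 + p.2 = q.2 + p.1 → q = p) : maxdiag S = 1 := by
  unfold maxdiag
  apply le_antisymm
  · refine Finset.sup_le fun p hp => Finset.card_le_one.mpr fun a ha b hb => ?_
    rw [Finset.mem_filter] at ha hb
    rw [h p hp a ha.1 ha.2, h p hp b hb.1 hb.2]
  · obtain ⟨p, hp⟩ := hne
    exact le_trans (Finset.card_pos.mpr ⟨p, Finset.mem_filter.mpr ⟨hp, Nat.add_comm p.1 p.2⟩⟩)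
      (Finset.le_sup (f := fun p => (S.filter fun q => q.1 + p.2 = q.2 + p.1).card) hp)

/-- The matrix of valuations: the `(i,j)` entry (1-based) is
`maxdiag(μ_i \ λ_j)` for `i = n` and `maxdiag(μ_i \ λ_j) + maxdiag(μ_i^T \ λ_j)`
otherwise, where `μ_i` is the `i×n` rectangle for `i < n` and the hook `(n,1^{n-1})` for
`i = n`, and `λ_j = (n^{n-j}, (n-1)^{j-1})`. It equals the matrix with entries `1` if
`i = n`, `1` if `i ≠ n` and `j ≤ n - i`, and `2` if `i ≠ n` and `j > n - i`. -/
theorem stmt_11 (n i j : ℕ) (hi1 : 1 ≤ i) (hin : i ≤ n) (hj1 : 1 ≤ j) (hjn : j ≤ n) :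
    (if i = n then
        maxdiag (boxesOf n (hookFun n (n - 1)) \ boxesOf n (lamJ n j))
      else
        maxdiag (boxesOf n (fun r => if r ≤ i then n else 0) \ boxesOf n (lamJ n j)) +
          maxdiag (boxesOf n (fun r => if r ≤ n then i else 0) \ boxesOf n (lamJ n j))) =
      (if i = n then 1 else if j ≤ n - i then 1 else 2) := by
  rcases eq_or_ne i n with hi | hi
  · rw [if_pos hi, if_pos hi]
    apply maxdiag_eq_one
    · refine ⟨(n, 1), Finset.mem_sdiff.mpr ⟨mem_boxesOf.mpr ?_, fun hmem => ?_⟩⟩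
      · simp only [hookFun]; split_ifs <;> omega
      · have := mem_boxesOf.mp hmem
        simp only [lamJ] at this; split_ifs at this <;> omega
    · rintro ⟨p1, p2⟩ hp ⟨q1, q2⟩ hq hd
      rw [Finset.mem_sdiff, mem_boxesOf, mem_boxesOf] at hp hq
      simp only [Prod.mk.injEq]
      simp only [hookFun, lamJ] at hp hq
      split_ifs at hp hq <;> omega
  · rw [if_neg hi, if_neg hi]
    have h2 : maxdiag (boxesOf n (fun r => if r ≤ n then i else 0) \ boxesOf n (lamJ n j)) = 1 := by
      apply maxdiag_eq_one
      · refine ⟨(n, 1), Finset.mem_sdiff.mpr ⟨mem_boxesOf.mpr ?_, fun hmem => ?_⟩⟩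
        · simp only; split_ifs <;> omega
        · have := mem_boxesOf.mp hmem
          simp only [lamJ] at this; split_ifs at this <;> omega
      · rintro ⟨p1, p2⟩ hp ⟨q1, q2⟩ hq hd
        rw [Finset.mem_sdiff, mem_boxesOf, mem_boxesOf] at hp hq
        simp only [Prod.mk.injEq]
        simp only [lamJ] at hp hq
        split_ifs at hp hq <;> omega
    rcases le_or_gt j (n - i) with hji | hji
    · rw [if_pos hji]
      have h1 : maxdiag (boxesOf n (fun r => if r ≤ i then n else 0) \ boxesOf n (lamJ n j)) = 0 := by
        apply maxdiag_eq_zero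
        rintro ⟨p1, p2⟩ hp
        rw [Finset.mem_sdiff, mem_boxesOf, mem_boxesOf] at hp
        simp only [lamJ] at hp
        split_ifs at hp <;> omega
      omega
    · rw [if_neg (by omega)]
      have h1 : maxdiag (boxesOf n (fun r => if r ≤ i then n else 0) \ boxesOf n (lamJ n j)) = 1 := by
        apply maxdiag_eq_one
        · refine ⟨(i, n), Finset.mem_sdiff.mpr ⟨mem_boxesOf.mpr ?_, fun hmem => ?_⟩⟩
          · simp only; split_ifs <;> omega
          · have := mem_boxesOf.mp hmem
            simp only [lamJ] at this; split_ifs at this <;> omega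
        · rintro ⟨p1, p2⟩ hp ⟨q1, q2⟩ hq hd
          rw [Finset.mem_sdiff, mem_boxesOf, mem_boxesOf] at hp hq
          simp only [Prod.mk.injEq]
          simp only [lamJ] at hp hq
          split_ifs at hp hq <;> omega
      omega
end
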